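/- Let n ≥ 1 and let v be a permutation of {1,…,n}. Then, as an identity in ℤ[t]: Σ_{x ∈ basis(v)} t^{n − max(x)} = Σ_{u ∈ WI[n], Des(u) ⊆ Des(v)} t^{n − max(u)}, where max(w) denotes the maximum value of w. -/

import Mathlib

namespace CayPaper

/-- A word of length `n` (1-indexed): it vanishes outside `{1,…,n}`. -/
def IsWord (n : ℕ) (v : ℕ → ℕ) : Prop := ∀ i, i ∉ Set.Icc 1 n → v i = 0

/-- A Cayley permutation of length `n`: a word on `{1,…,n}` whose image is `{1,…,k}`
for some `k ≤ n`. -/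
def IsCayley (n : ℕ) (v : ℕ → ℕ) : Prop :=
  IsWord n v ∧ ∃ k, v '' Set.Icc 1 n = Set.Icc 1 k

/-- A weakly increasing Cayley permutation of length `n`. -/
def IsWI (n : ℕ) (v : ℕ → ℕ) : Prop :=
  IsCayley n v ∧ MonotoneOn v (Set.Icc 1 n)

/-- A permutation of `{1,…,n}`, encoded as a word. -/
def IsPermWord (n : ℕ) (v : ℕ → ℕ) : Prop :=
  IsWord n v ∧ Set.BijOn v (Set.Icc 1 n) (Set.Icc 1 n)

/-- The weak descent set `Des(v) = { i ∈ {1,…,n−1} : v(i) ≥ v(i+1) }`. -/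
def desSet (n : ℕ) (v : ℕ → ℕ) : Finset ℕ :=
  (Finset.Icc 1 (n - 1)).filter fun i => v (i + 1) ≤ v i

/-- The strict descent set `Des∘(v) = { i : v(i) > v(i+1) }`. -/
def sdesSet (n : ℕ) (v : ℕ → ℕ) : Finset ℕ :=
  (Finset.Icc 1 (n - 1)).filter fun i => v (i + 1) < v i

/-- The weak ascent set `Asc(v) = { i : v(i) ≤ v(i+1) }`. -/
def ascSet (n : ℕ) (v : ℕ → ℕ) : Finset ℕ :=
  (Finset.Icc 1 (n - 1)).filter fun i => v i ≤ v (i + 1)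

/-- The strict ascent set `Asc∘(v) = { i : v(i) < v(i+1) }`. -/
def sascSet (n : ℕ) (v : ℕ → ℕ) : Finset ℕ :=
  (Finset.Icc 1 (n - 1)).filter fun i => v i < v (i + 1)

def des (n : ℕ) (v : ℕ → ℕ) : ℕ := (desSet n v).card
def sdes (n : ℕ) (v : ℕ → ℕ) : ℕ := (sdesSet n v).card
def asc (n : ℕ) (v : ℕ → ℕ) : ℕ := (ascSet n v).card
def sasc (n : ℕ) (v : ℕ → ℕ) : ℕ := (sascSet n v).card

/-- The maximum value of a word. -/
def wmax (n : ℕ) (v : ℕ → ℕ) : ℕ := (Finset.Icc 1 n).sup v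

/-- Reverse: `v^r(i) = v(n+1−i)`. -/
def wrev (n : ℕ) (v : ℕ → ℕ) : ℕ → ℕ := fun i =>
  if 1 ≤ i ∧ i ≤ n then v (n + 1 - i) else 0

/-- Complement: `v^c(i) = max(v)+1−v(i)`. -/
def wcomp (n : ℕ) (v : ℕ → ℕ) : ℕ → ℕ := fun i =>
  if 1 ≤ i ∧ i ≤ n then wmax n v + 1 - v i else 0

/-- The word `(σ(1), …, σ(n))` (1-indexed) of a permutation `σ` of `Fin n`. -/
def permWord (n : ℕ) (σ : Equiv.Perm (Fin n)) : ℕ → ℕ := fun i =>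
  if h : 1 ≤ i ∧ i ≤ n then ((σ ⟨i - 1, by omega⟩ : Fin n) : ℕ) + 1 else 0

/-- The conjugate of `u`: the unique weakly increasing Cayley permutation of
length `n` whose descent set is `{1,…,n−1} \ Des(u)`. -/
noncomputable def conjWI (n : ℕ) (u : ℕ → ℕ) : ℕ → ℕ :=
  haveI := Classical.dec (∃ w, IsWI n w ∧ desSet n w = Finset.Icc 1 (n - 1) \ desSet n u)
  if h : ∃ w, IsWI n w ∧ desSet n w = Finset.Icc 1 (n - 1) \ desSet n u
    then h.choose else fun _ => 0

/-- A Burge matrix: every row and every column contains a nonzero entry. -/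
def IsBurge {p q : ℕ} (M : Matrix (Fin p) (Fin q) ℕ) : Prop :=
  (∀ i, ∃ j, M i j ≠ 0) ∧ (∀ j, ∃ i, M i j ≠ 0)

/-- The size of a matrix with natural entries: the sum of its entries. -/
def matSize {p q : ℕ} (M : Matrix (Fin p) (Fin q) ℕ) : ℕ := ∑ i, ∑ j, M i j

/-- Burge matrices of size `n` (of all dimensions). -/
def BurgeMatrices (n : ℕ) : Set (Σ p : ℕ, Σ q : ℕ, Matrix (Fin p) (Fin q) ℕ) :=
  {M | IsBurge M.2.2 ∧ matSize M.2.2 = n}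

/-- Binary Burge matrices of size `n`. -/
def BinaryBurgeMatrices (n : ℕ) : Set (Σ p : ℕ, Σ q : ℕ, Matrix (Fin p) (Fin q) ℕ) :=
  {M | M ∈ BurgeMatrices n ∧ ∀ i j, M.2.2 i j ≤ 1}

/-- Burge matrices of size `n` whose every column sums to `1`. -/
def ColSumOneBurgeMatrices (n : ℕ) : Set (Σ p : ℕ, Σ q : ℕ, Matrix (Fin p) (Fin q) ℕ) :=
  {M | M ∈ BurgeMatrices n ∧ ∀ j, ∑ i, M.2.2 i j = 1}

/-- Burge words: pairs `(u,v) ∈ WI[n] × Cay[n]` with `Des(u) ⊆ Des(v)`. -/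
def BurPairs (n : ℕ) : Set ((ℕ → ℕ) × (ℕ → ℕ)) :=
  {p | IsWI n p.1 ∧ IsCayley n p.2 ∧ desSet n p.1 ⊆ desSet n p.2}

/-- Pairs `(u,v) ∈ WI[n] × Cay[n]` with `Des(u) ⊆ Des∘(v)`. -/
def BBurPairs (n : ℕ) : Set ((ℕ → ℕ) × (ℕ → ℕ)) :=
  {p | IsWI n p.1 ∧ IsCayley n p.2 ∧ desSet n p.1 ⊆ sdesSet n p.2}

/-- Pairs `(u,v) ∈ WI[n] × S_n` with `Des(u) ⊆ Des(v)`. -/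
def PBurPairs (n : ℕ) : Set ((ℕ → ℕ) × (ℕ → ℕ)) :=
  {p | IsWI n p.1 ∧ IsPermWord n p.2 ∧ desSet n p.1 ⊆ desSet n p.2}

/-- `Ω[n]`: pairs `(u,v) ∈ WI[n] × Cay[n]` with `Des(u) ⊇ Des(v)`. -/
def OmegaPairs (n : ℕ) : Set ((ℕ → ℕ) × (ℕ → ℕ)) :=
  {p | IsWI n p.1 ∧ IsCayley n p.2 ∧ desSet n p.2 ⊆ desSet n p.1}

/-- `v` lists the positions `1,…,n` in the order obtained by sorting the columns
`(x_i, i)` so that first components are weakly increasing, ties broken by strictly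
decreasing second components.  For a permutation word `v` this says exactly that
`v = Γ(id, x)`, the bottom row of the Burge transpose of `(id, x)`. -/
def sortsColumns (n : ℕ) (x v : ℕ → ℕ) : Prop :=
  ∀ i ∈ Finset.Icc 1 (n - 1),
    x (v i) < x (v (i + 1)) ∨ (x (v i) = x (v (i + 1)) ∧ v (i + 1) < v i)

/-- The Fishburn basis of a permutation word `v`:
`basis(v) = { x ∈ Cay[n] : Γ(id, x) = v }`. -/
def fishburnBasis (n : ℕ) (v : ℕ → ℕ) : Set (ℕ → ℕ) :=
  {x | IsCayley n x ∧ sortsColumns n x v}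

/-- Stanley's `v`-compatibility condition:
`x(v(1)) ≤ ⋯ ≤ x(v(n))` with strict inequality at every ascent of `v`. -/
def VCompatible (n : ℕ) (v x : ℕ → ℕ) : Prop :=
  (∀ i ∈ Finset.Icc 1 (n - 1), x (v i) ≤ x (v (i + 1))) ∧
    ∀ i ∈ Finset.Icc 1 (n - 1), v i < v (i + 1) → x (v i) < x (v (i + 1))

/-- A map `{1,…,n} → {1,…,m}`, encoded as a word. -/
def IsMapTo (n m : ℕ) (x : ℕ → ℕ) : Prop :=
  IsWord n x ∧ ∀ i ∈ Set.Icc 1 n, x i ∈ Set.Icc 1 m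

/-- Weakly increasing maps `{1,…,n} → {1,…,m}`. -/
def WIgen (n m : ℕ) : Set (ℕ → ℕ) :=
  {u | IsMapTo n m u ∧ MonotoneOn u (Set.Icc 1 n)}



section Helpers

lemma permWord_mem {n : ℕ} (σ : Equiv.Perm (Fin n)) {i : ℕ} (h1 : 1 ≤ i) (h2 : i ≤ n) :
    1 ≤ permWord n σ i ∧ permWord n σ i ≤ n := by
  unfold permWord
  rw [dif_pos ⟨h1, h2⟩]
  have := (σ ⟨i - 1, by omega⟩).isLt
  omega

lemma permWord_def {n : ℕ} (σ : Equiv.Perm (Fin n)) {i : ℕ} (h1 : 1 ≤ i) (h2 : i ≤ n) :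
    permWord n σ i = ((σ ⟨i - 1, by omega⟩ : Fin n) : ℕ) + 1 := by
  unfold permWord; exact dif_pos ⟨h1, h2⟩

lemma permWord_inv {n : ℕ} (σ : Equiv.Perm (Fin n)) {i : ℕ} (h1 : 1 ≤ i) (h2 : i ≤ n) :
    permWord n σ⁻¹ (permWord n σ i) = i := by
  have hi : i - 1 < n := by omega
  have hlt : ((σ ⟨i - 1, hi⟩ : Fin n) : ℕ) < n := (σ _).isLt
  rw [permWord_def σ h1 h2,
    permWord_def σ⁻¹ (Nat.le_add_left 1 _) (by omega)]
  have h3 : (⟨((σ ⟨i - 1, by omega⟩ : Fin n) : ℕ) + 1 - 1, by omega⟩ : Fin n)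
      = σ ⟨i - 1, hi⟩ := Fin.ext (by simp)
  rw [h3, Equiv.Perm.inv_def, Equiv.symm_apply_apply]
  show i - 1 + 1 = i
  omega

lemma permWord_inv' {n : ℕ} (σ : Equiv.Perm (Fin n)) {i : ℕ} (h1 : 1 ≤ i) (h2 : i ≤ n) :
    permWord n σ (permWord n σ⁻¹ i) = i := by
  have := permWord_inv σ⁻¹ h1 h2
  rwa [inv_inv] at this

lemma permWord_bijOn {n : ℕ} (σ : Equiv.Perm (Fin n)) :
    Set.BijOn (permWord n σ) (Set.Icc 1 n) (Set.Icc 1 n) := by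
  refine ⟨fun i hi => ?_, fun i hi j hj hij => ?_, fun j hj => ?_⟩
  · exact (permWord_mem σ hi.1 hi.2 : _)
  · have h1 := permWord_inv σ hi.1 hi.2
    have h2 := permWord_inv σ hj.1 hj.2
    rw [← h1, ← h2, hij]
  · refine ⟨permWord n σ⁻¹ j, ?_, permWord_inv' σ hj.1 hj.2⟩
    exact (permWord_mem σ⁻¹ hj.1 hj.2 : _)

lemma monotoneOn_of_step {n : ℕ} {u : ℕ → ℕ}
    (h : ∀ i, 1 ≤ i → i < n → u i ≤ u (i + 1)) : MonotoneOn u (Set.Icc 1 n) := by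
  intro a ha b hb hab
  rw [Set.mem_Icc] at ha hb
  have key : ∀ m, a + m ≤ n → u a ≤ u (a + m) := by
    intro m
    induction m with
    | zero => intro _; exact le_rfl
    | succ m ih =>
      intro hm
      exact le_trans (ih (by omega)) (h (a + m) (by omega) (by omega))
  have hb' : b = a + (b - a) := by omega
  rw [hb']
  exact key _ (by omega)

lemma permWord_image {n : ℕ} (σ : Equiv.Perm (Fin n)) :
    (Finset.Icc 1 n).image (permWord n σ) = Finset.Icc 1 n := by
  apply Finset.coe_injective
  rw [Finset.coe_image, Finset.coe_Icc]
  exact (permWord_bijOn σ).image_eq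

lemma wmax_comp {n : ℕ} (σ : Equiv.Perm (Fin n)) (x : ℕ → ℕ) :
    wmax n (fun i => if 1 ≤ i ∧ i ≤ n then x (permWord n σ i) else 0) = wmax n x := by
  unfold wmax
  conv_rhs => rw [← permWord_image σ]
  rw [Finset.sup_image]
  apply Finset.sup_congr rfl
  intro i hi
  rw [Finset.mem_Icc] at hi
  simp [hi.1, hi.2, Function.comp]

end Helpers

/-- Lemma 6.3: for a permutation `v`,
`Σ_{x ∈ basis(v)} t^{n−max(x)} = Σ_{u ∈ WI(v)} t^{n−max(u)}` in `ℤ[t]`. -/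
theorem stmt11 (n : ℕ) (hn : 1 ≤ n) (σ : Equiv.Perm (Fin n)) :
    (∑ᶠ x ∈ fishburnBasis n (permWord n σ),
        (Polynomial.X : Polynomial ℤ) ^ (n - wmax n x))
      = ∑ᶠ u ∈ {u : ℕ → ℕ | IsWI n u ∧ desSet n u ⊆ desSet n (permWord n σ)},
          (Polynomial.X : Polynomial ℤ) ^ (n - wmax n u) := by
  classical
  set v := permWord n σ with hv
  set e : (ℕ → ℕ) → (ℕ → ℕ) := fun x i => if 1 ≤ i ∧ i ≤ n then x (v i) else 0 with he
  apply finsum_mem_eq_of_bijOn e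
  · constructor
    · -- MapsTo
      rintro x ⟨⟨hxw, k, hxim⟩, hsort⟩
      have hex : ∀ i ∈ Set.Icc 1 n, e x i = x (v i) := by
        rintro i ⟨h1, h2⟩; simp [he, h1, h2]
      have hstep : ∀ i, 1 ≤ i → i < n → x (v i) ≤ x (v (i + 1)) := by
        intro i h1 h2
        rcases hsort i (Finset.mem_Icc.mpr ⟨h1, by omega⟩) with h | ⟨h, _⟩
        · exact h.le
        · exact h.le
      refine ⟨⟨⟨?_, k, ?_⟩, ?_⟩, ?_⟩
      · intro i hi; simp only [he]
        rw [Set.mem_Icc] at hi; rw [if_neg (by omega)]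
      · rw [Set.image_congr hex,
          show (fun a => x (v a)) = x ∘ v from rfl, Set.image_comp, hv,
          (permWord_bijOn σ).image_eq]
        exact hxim
      · apply monotoneOn_of_step
        intro i h1 h2
        rw [hex i ⟨h1, by omega⟩, hex (i + 1) ⟨by omega, by omega⟩]
        exact hstep i h1 h2
      · intro i hi
        rw [desSet, Finset.mem_filter, Finset.mem_Icc] at hi
        obtain ⟨⟨h1, h2⟩, hle⟩ := hi
        rw [hex i ⟨h1, by omega⟩, hex (i + 1) ⟨by omega, by omega⟩] at hle
        rcases hsort i (Finset.mem_Icc.mpr ⟨h1, h2⟩) with h | ⟨_, h⟩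
        · omega
        · rw [desSet, Finset.mem_filter, Finset.mem_Icc]; exact ⟨⟨h1, h2⟩, h.le⟩
    constructor
    · -- InjOn
      rintro x ⟨⟨hxw, _⟩, _⟩ x' ⟨⟨hx'w, _⟩, _⟩ hxx
      funext j
      by_cases hj : j ∈ Set.Icc 1 n
      · obtain ⟨i, hi, hij⟩ := (permWord_bijOn σ).surjOn hj
        rw [Set.mem_Icc] at hi
        have := congrFun hxx i
        simp only [he, if_pos (And.intro hi.1 hi.2)] at this
        rw [← hij]; exact this
      · rw [hxw j hj, hx'w j hj]
    · -- SurjOn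
      rintro u ⟨⟨⟨huw, k, huim⟩, humono⟩, hudes⟩
      set w := permWord n σ⁻¹ with hw
      set x : ℕ → ℕ := fun j => if 1 ≤ j ∧ j ≤ n then u (w j) else 0 with hx
      have hvmem : ∀ i, 1 ≤ i → i ≤ n → 1 ≤ v i ∧ v i ≤ n := fun i h1 h2 => permWord_mem σ h1 h2
      have hxv : ∀ i, 1 ≤ i → i ≤ n → x (v i) = u i := by
        intro i h1 h2
        have hm := hvmem i h1 h2
        simp only [hx, if_pos hm]
        rw [hw, hv, permWord_inv σ h1 h2]
      refine ⟨x, ⟨⟨?_, k, ?_⟩, ?_⟩, ?_⟩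
      · intro j hj; rw [Set.mem_Icc] at hj; simp only [hx]; rw [if_neg (by omega)]
      · have hxw : ∀ j ∈ Set.Icc 1 n, x j = u (w j) := by
          rintro j ⟨h1, h2⟩; simp [hx, h1, h2]
        rw [Set.image_congr hxw,
          show (fun a => u (w a)) = u ∘ w from rfl, Set.image_comp, hw,
          (permWord_bijOn σ⁻¹).image_eq]
        exact huim
      · -- sortsColumns
        intro i hi
        rw [Finset.mem_Icc] at hi
        obtain ⟨h1, h2⟩ := hi
        rw [hxv i h1 (by omega), hxv (i + 1) (by omega) (by omega)]
        have hle : u i ≤ u (i + 1) :=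
          humono ⟨h1, by omega⟩ ⟨by omega, by omega⟩ (by omega)
        rcases lt_or_eq_of_le hle with hlt | heq
        · exact Or.inl hlt
        · refine Or.inr ⟨heq, ?_⟩
          have : i ∈ desSet n u := by
            rw [desSet, Finset.mem_filter, Finset.mem_Icc]; exact ⟨⟨h1, h2⟩, heq.ge⟩
          have := hudes this
          rw [desSet, Finset.mem_filter] at this
          have hne : v (i + 1) ≠ v i := by
            intro hcontra
            have := (permWord_bijOn σ).injOn ⟨by omega, by omega⟩
              (Set.mem_Icc.mpr ⟨h1, by omega⟩) hcontra
            omega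
          omega
      · -- e x = u
        funext i
        by_cases hi : 1 ≤ i ∧ i ≤ n
        · simp only [he, if_pos hi]; exact hxv i hi.1 hi.2
        · simp only [he, if_neg hi]
          exact (huw i (by rw [Set.mem_Icc]; omega)).symm
  · -- values equal
    rintro x ⟨⟨hxw, _⟩, _⟩
    congr 1
    rw [show e x = fun i => if 1 ≤ i ∧ i ≤ n then x (v i) else 0 from rfl, wmax_comp σ x]

end CayPaper
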